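/- arXiv:2403.17066 — 3 statements merged into one kernel-verified Lean document; each statement's English description precedes it below -/
import Mathlib

section
/- Let σ ∈ Σ_k be a permutation with cycles c₁,…,c_r, and let a = diag(t₁,…,t_k) be a diagonal matrix. Then the characteristic polynomial det(X·P_σ·a − Id) of the product of the permutation matrix P_σ with a equals ∏_{j=1}^{r} (X^{|c_j|} − ∏_{i ∈ c_j} t_i). -/
open Polynomial

section CharpolyPermAux

variable {R : Type*} [CommRing R] {n : Type*} [Fintype n] [DecidableEq n]

private lemma pmd_apply (σ : Equiv.Perm n) (t : n → R) (i j : n) :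
    (σ.permMatrix R * Matrix.diagonal t) i j = if j = σ i then t j else 0 := by
  rw [Matrix.mul_diagonal]
  simp only [Equiv.Perm.permMatrix, PEquiv.toMatrix_apply, Equiv.toPEquiv_apply, Option.mem_def,
    Option.some.injEq]
  split <;> split <;> simp_all

private lemma charmatrix_pmd_apply (σ : Equiv.Perm n) (t : n → R) (i j : n) :
    (σ.permMatrix R * Matrix.diagonal t).charmatrix i j
      = (if i = j then X else 0) - (if j = σ i then C (t j) else 0) := by
  by_cases h : i = j
  · subst h
    rw [Matrix.charmatrix_apply_eq, pmd_apply]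
    split <;> simp
  · rw [Matrix.charmatrix_apply_ne _ _ _ h, pmd_apply]
    simp only [if_neg h, zero_sub]
    split <;> simp

/-- The characteristic polynomial for a full-support cycle times a diagonal matrix. -/
private lemma cycle_block_det [Nonempty n] (τ : Equiv.Perm n)
    (h1 : ∀ x, τ x ≠ x) (h2 : ∀ x y : n, τ.SameCycle x y) (u : n → R) :
    (τ.permMatrix R * Matrix.diagonal u).charpoly
      = X ^ Fintype.card n - C (∏ x, u x) := by
  have hτ1 : τ ≠ 1 := by
    intro h
    exact h1 (Classical.arbitrary n) (by simp [h])
  have hcyc : τ.IsCycle := ⟨Classical.arbitrary n, h1 _, fun y _ => h2 _ y⟩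
  have hsupp : τ.support = Finset.univ := by
    ext x; simp [Equiv.Perm.mem_support, h1 x]
  rw [Matrix.charpoly, Matrix.det_apply']
  rw [show (Finset.univ : Finset (Equiv.Perm n)) = {1, τ⁻¹} ∪ (Finset.univ \ {1, τ⁻¹}) by
    simp [Finset.union_sdiff_of_subset]]
  rw [Finset.sum_union (Finset.disjoint_sdiff)]
  have hzero : ∀ π ∈ Finset.univ \ ({1, τ⁻¹} : Finset (Equiv.Perm n)),
      (↑↑(Equiv.Perm.sign π) : R[X]) *
        ∏ i, (τ.permMatrix R * Matrix.diagonal u).charmatrix (π i) i = 0 := by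
    intro π hπ
    simp only [Finset.mem_sdiff, Finset.mem_insert, Finset.mem_singleton, not_or] at hπ
    obtain ⟨-, hπ1, hπτ⟩ := hπ
    have : ∃ i, π i ≠ i ∧ π i ≠ τ⁻¹ i := by
      by_contra hcon
      push_neg at hcon
      have hall : ∀ i, π i = i ∨ π i = τ⁻¹ i := by
        intro i
        by_cases h : π i = i
        · exact Or.inl h
        · exact Or.inr (hcon i h)
      have hmoved : ∀ x, π x ≠ x → π x = τ⁻¹ x := fun x hx => (hall x).resolve_left hx
      have hclos_inv : ∀ x, π x ≠ x → π (τ⁻¹ x) ≠ τ⁻¹ x := by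
        intro x hx hc
        have h1' : π x = τ⁻¹ x := hmoved x hx
        have h3 : τ⁻¹ x = x := π.injective (h1'.symm ▸ hc : π (τ⁻¹ x) = π x)
        have := congrArg τ h3
        rw [Equiv.Perm.coe_inv, Equiv.apply_symm_apply] at this
        exact h1 x this.symm
      have hclos : ∀ x, π x ≠ x → π (τ x) ≠ τ x := by
        intro x hx hc
        have hz : π (π⁻¹ x) = x := π.apply_symm_apply x
        rcases hall (π⁻¹ x) with h | h
        · rw [hz] at h
          have := congrArg π h
          rw [hz] at this
          exact hx this
        · rw [hz] at h
          have h3 : π⁻¹ x = τ x := by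
            have := congrArg τ h
            rw [Equiv.Perm.coe_inv, Equiv.apply_symm_apply] at this
            exact this.symm
          have h4 : π (τ x) = x := by rw [← h3]; exact hz
          rw [hc] at h4
          exact h1 x h4
      have hzpow : ∀ (k : ℤ) (x : n), π x ≠ x → π ((τ ^ k) x) ≠ (τ ^ k) x := by
        intro k
        induction k using Int.induction_on with
        | zero => simpa using fun x hx => hx
        | succ k ih =>
            intro x hx
            have hstep : (τ ^ (k + 1 : ℤ)) x = τ ((τ ^ (k : ℤ)) x) := by
              rw [add_comm, zpow_add, zpow_one, Equiv.Perm.mul_apply]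
            rw [hstep]
            exact hclos _ (ih x hx)
        | pred k ih =>
            intro x hx
            have hstep : (τ ^ (-k - 1 : ℤ)) x = τ⁻¹ ((τ ^ (-k : ℤ)) x) := by
              rw [sub_eq_add_neg, add_comm, zpow_add, Equiv.Perm.mul_apply, zpow_neg, zpow_one]
            rw [hstep]
            exact hclos_inv _ (ih x hx)
      obtain ⟨a, ha⟩ : ∃ a, π a ≠ a := by
        by_contra hco
        push_neg at hco
        exact hπ1 (Equiv.ext fun x => by simp [hco x])
      have hallmoved : ∀ y, π y ≠ y := by
        intro y
        obtain ⟨k, hk⟩ := h2 a y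
        have := hzpow k a ha
        rwa [hk] at this
      exact hπτ (Equiv.ext fun x => hmoved x (hallmoved x))
    obtain ⟨i, hi1, hi2⟩ := this
    apply mul_eq_zero_of_right
    apply Finset.prod_eq_zero (Finset.mem_univ i)
    rw [charmatrix_pmd_apply]
    have c2 : ¬ (i = τ (π i)) := by
      intro h
      apply hi2
      apply τ.injective
      rw [Equiv.Perm.coe_inv, Equiv.apply_symm_apply, ← h]
    rw [if_neg hi1, if_neg c2, sub_zero]
  rw [Finset.sum_eq_zero hzero, add_zero]
  have hne : (1 : Equiv.Perm n) ≠ τ⁻¹ := by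
    intro h
    exact hτ1 (by rw [← inv_inv τ, ← h, inv_one])
  rw [Finset.sum_pair hne]
  have term1 : (↑↑(Equiv.Perm.sign (1 : Equiv.Perm n)) : R[X]) *
      ∏ i, (τ.permMatrix R * Matrix.diagonal u).charmatrix ((1 : Equiv.Perm n) i) i
        = X ^ Fintype.card n := by
    simp only [map_one, Units.val_one, Int.cast_one, one_mul, Equiv.Perm.one_apply]
    rw [Finset.prod_congr rfl (fun i _ => ?_), Finset.prod_const, Finset.card_univ]
    rw [charmatrix_pmd_apply, if_pos rfl, if_neg (fun h => h1 i h.symm), sub_zero]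
  have term2 : (↑↑(Equiv.Perm.sign τ⁻¹) : R[X]) *
      ∏ i, (τ.permMatrix R * Matrix.diagonal u).charmatrix (τ⁻¹ i) i
        = - C (∏ x, u x) := by
    have hentry : ∀ i, (τ.permMatrix R * Matrix.diagonal u).charmatrix (τ⁻¹ i) i
        = -1 * C (u i) := by
      intro i
      rw [charmatrix_pmd_apply]
      have c1 : ¬ (τ⁻¹ i = i) := by
        intro h
        have := congrArg τ h
        rw [Equiv.Perm.coe_inv, Equiv.apply_symm_apply] at this
        exact h1 i this.symm
      rw [if_neg c1, if_pos (by rw [Equiv.Perm.coe_inv, Equiv.apply_symm_apply]), zero_sub]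
      ring
    have hprod : ∏ i, (τ.permMatrix R * Matrix.diagonal u).charmatrix (τ⁻¹ i) i
        = (-1) ^ Fintype.card n * C (∏ x, u x) := by
      rw [Finset.prod_congr rfl (fun i _ => hentry i), Finset.prod_mul_distrib,
        Finset.prod_const, Finset.card_univ, map_prod]
    have hsign : (↑↑(Equiv.Perm.sign τ⁻¹) : R[X]) = -(-1) ^ Fintype.card n := by
      rw [Equiv.Perm.sign_inv, hcyc.sign, hsupp, Finset.card_univ]
      push_cast
      ring
    rw [hprod, hsign]
    have hone : ((-1 : R[X]) ^ Fintype.card n) * ((-1 : R[X]) ^ Fintype.card n) = 1 := by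
      rw [← mul_pow]; norm_num
    linear_combination (-(C (∏ x, u x))) * hone
  rw [term1, term2]
  ring

private lemma det_nested (A : Matrix n n R) (s : Finset n)
    (q : n → Prop) [DecidablePred q] (hq : ∀ i, q i → i ∈ s) :
    ((A.toSquareBlockProp (· ∈ s)).toSquareBlockProp (fun i => q ↑i)).det
      = (A.toSquareBlockProp q).det := by
  let e : {a // q a} ≃ {i : {a : n // a ∈ s} // q ↑i} :=
    { toFun := fun j => ⟨⟨↑j, hq _ j.2⟩, j.2⟩
      invFun := fun i => ⟨↑↑i, i.2⟩
      left_inv := fun j => rfl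
      right_inv := fun i => by ext; rfl }
  rw [← Matrix.det_submatrix_equiv_self e]
  congr 1

private lemma det_split (A : Matrix n n R) (s₁ s : Finset n) (h₁ : s₁ ⊆ s)
    (hz : ∀ i j, i ∈ s → j ∈ s → ¬(i ∈ s₁ ↔ j ∈ s₁) → A i j = 0) :
    (A.toSquareBlockProp (· ∈ s)).det
      = (A.toSquareBlockProp (· ∈ s₁)).det * (A.toSquareBlockProp (· ∈ s \ s₁)).det := by
  rw [Matrix.twoBlockTriangular_det (A.toSquareBlockProp (· ∈ s)) (fun i => (i : n) ∈ s₁)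
      (fun i hi j hj => hz ↑i ↑j i.2 j.2 (by tauto))]
  congr 1
  · exact (det_nested A s _ (fun i hi => h₁ hi)).trans (by congr!)
  · rw [Matrix.equiv_block_det _ (fun i : {a : n // a ∈ s} =>
      (show (↑i ∈ s \ s₁) ↔ ¬((i : n) ∈ s₁) by simp [Finset.mem_sdiff, i.2]))]
    exact (det_nested A s (fun i => i ∈ s \ s₁)
      (fun i hi => (Finset.mem_sdiff.mp hi).1)).trans (by congr!)

private lemma det_diag_block (A : Matrix n n R) (u : Finset n)
    (h0 : ∀ i j, i ∈ u → j ∈ u → i ≠ j → A i j = 0) :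
    (A.toSquareBlockProp (· ∈ u)).det = ∏ i ∈ u, A i i := by
  have hA : A.toSquareBlockProp (· ∈ u)
      = Matrix.diagonal (fun i : {a // a ∈ u} => A ↑i ↑i) := by
    ext i j
    by_cases h : i = j
    · subst h; rw [Matrix.diagonal_apply_eq]; rfl
    · rw [Matrix.diagonal_apply_ne _ h]
      exact h0 _ _ i.2 j.2 (fun hc => h (Subtype.ext hc))
  rw [hA, Matrix.det_diagonal]
  exact (Finset.prod_coe_sort u (fun i => A i i)).symm ▸ rfl

private lemma main_aux (t : n → R) (σ : Equiv.Perm n) :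
    ∀ s : Finset n, σ.support ⊆ s →
    ((σ.permMatrix R * Matrix.diagonal t).charmatrix.toSquareBlockProp (· ∈ s)).det
      = (∏ c ∈ σ.cycleFactorsFinset, (X ^ c.support.card - C (∏ i ∈ c.support, t i))) *
        ∏ i ∈ s \ σ.support, (X - C (t i)) := by
  induction σ using Equiv.Perm.cycle_induction_on with
  | base_one =>
      intro s _
      rw [det_diag_block _ s (fun i j _ _ hij => by
        rw [charmatrix_pmd_apply]
        simp [if_neg hij, if_neg (Ne.symm hij), Ne.symm hij])]
      rw [Equiv.Perm.cycleFactorsFinset_one, Finset.prod_empty, one_mul,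
        Equiv.Perm.support_one, Finset.sdiff_empty]
      refine Finset.prod_congr rfl (fun i _ => ?_)
      rw [charmatrix_pmd_apply]
      simp
  | base_cycles σ hσ =>
      intro s hs
      have hz : ∀ i j, i ∈ s → j ∈ s → ¬(i ∈ σ.support ↔ j ∈ σ.support) →
          (σ.permMatrix R * Matrix.diagonal t).charmatrix i j = 0 := by
        intro i j _ _ hij
        have hne : i ≠ j := fun h => hij (h ▸ Iff.rfl)
        rw [charmatrix_pmd_apply, if_neg hne, if_neg, sub_zero]
        intro h
        by_cases hi : i ∈ σ.support
        · exact hij ⟨fun _ => h ▸ Equiv.Perm.apply_mem_support.mpr hi, fun _ => hi⟩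
        · rw [Equiv.Perm.notMem_support.mp hi] at h
          exact hne h.symm
      rw [det_split _ σ.support s hs hz]
      have hnemp : Nonempty {a // a ∈ σ.support} := by
        obtain ⟨x, hx⟩ := hσ.nonempty_support
        exact ⟨⟨x, hx⟩⟩
      have hmem : ∀ x : n, σ x ∈ σ.support ↔ x ∈ σ.support :=
        fun x => Equiv.Perm.apply_mem_support
      have hblock1 : ((σ.permMatrix R * Matrix.diagonal t).charmatrix.toSquareBlockProp
          (· ∈ σ.support))
          = ((σ.subtypePerm hmem).permMatrix R *
              Matrix.diagonal (fun i : {a // a ∈ σ.support} => t ↑i)).charmatrix := by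
        refine Matrix.ext (fun i j => ?_)
        show (σ.permMatrix R * Matrix.diagonal t).charmatrix ↑i ↑j = _
        rw [charmatrix_pmd_apply, charmatrix_pmd_apply]
        simp only [Subtype.ext_iff, Equiv.Perm.subtypePerm_apply]
      have hdet1 : (((σ.permMatrix R * Matrix.diagonal t).charmatrix.toSquareBlockProp
          (· ∈ σ.support))).det = X ^ σ.support.card - C (∏ i ∈ σ.support, t i) := by
        have h1 : ∀ x : {a // a ∈ σ.support}, (σ.subtypePerm hmem) x ≠ x := by
          rintro ⟨x, hx⟩ h
          rw [Subtype.ext_iff] at h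
          exact Equiv.Perm.mem_support.mp hx h
        have h2 : ∀ x y : {a // a ∈ σ.support}, (σ.subtypePerm hmem).SameCycle x y := by
          rintro ⟨x, hx⟩ ⟨y, hy⟩
          obtain ⟨k, hk⟩ := hσ.sameCycle (Equiv.Perm.mem_support.mp hx)
            (Equiv.Perm.mem_support.mp hy)
          refine ⟨k, ?_⟩
          rw [Equiv.Perm.subtypePerm_zpow]
          exact Subtype.ext hk
        have hcd := cycle_block_det (σ.subtypePerm hmem) h1 h2
          (fun i : {a // a ∈ σ.support} => t ↑i)
        rw [Matrix.charpoly] at hcd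
        rw [hblock1, hcd, Fintype.card_coe, Finset.prod_coe_sort]
      have hdet2 : (((σ.permMatrix R * Matrix.diagonal t).charmatrix.toSquareBlockProp
          (· ∈ s \ σ.support))).det = ∏ i ∈ s \ σ.support, (X - C (t i)) := by
        rw [det_diag_block _ _ (fun i j hi _ hij => by
          rw [charmatrix_pmd_apply, if_neg hij, if_neg, sub_zero]
          intro h
          rw [Equiv.Perm.notMem_support.mp (Finset.mem_sdiff.mp hi).2] at h
          exact hij h.symm)]
        refine Finset.prod_congr rfl (fun i hi => ?_)
        rw [charmatrix_pmd_apply, if_pos rfl,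
          if_pos (Equiv.Perm.notMem_support.mp (Finset.mem_sdiff.mp hi).2).symm]
      rw [hdet1, hdet2, hσ.cycleFactorsFinset_eq_singleton, Finset.prod_singleton]
  | induction_disjoint σ τ hd hc ihσ ihτ =>
      intro s hs
      have hsupp : (σ * τ).support = σ.support ∪ τ.support := hd.support_mul
      have hsσ : σ.support ⊆ s := fun x hx => hs (by
        rw [hsupp]; exact Finset.mem_union_left _ hx)
      have hdisj1 : ∀ x, x ∈ σ.support → x ∉ τ.support :=
        fun x hx => Finset.disjoint_left.mp hd.disjoint_support hx
      have happ1 : ∀ i, i ∈ σ.support → (σ * τ) i = σ i := by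
        intro i hi
        rw [Equiv.Perm.mul_apply, Equiv.Perm.notMem_support.mp (hdisj1 i hi)]
      have happ2 : ∀ i, i ∉ σ.support → (σ * τ) i = τ i := by
        intro i hi
        rw [Equiv.Perm.mul_apply]
        by_cases h : τ i = i
        · rw [h]
          exact Equiv.Perm.notMem_support.mp hi
        · have hτi : τ i ∈ τ.support :=
            Equiv.Perm.apply_mem_support.mpr (Equiv.Perm.mem_support.mpr h)
          exact Equiv.Perm.notMem_support.mp
            (Finset.disjoint_right.mp hd.disjoint_support hτi)
      have hτnotσ : ∀ i, (σ * τ) i ∈ σ.support → i ∈ σ.support := by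
        intro i hi
        by_contra hni
        rw [happ2 i hni] at hi
        by_cases h : τ i = i
        · rw [h] at hi; exact hni hi
        · exact hdisj1 _ hi (Equiv.Perm.apply_mem_support.mpr (Equiv.Perm.mem_support.mpr h))
      have hz : ∀ i j, i ∈ s → j ∈ s → ¬(i ∈ σ.support ↔ j ∈ σ.support) →
          ((σ * τ).permMatrix R * Matrix.diagonal t).charmatrix i j = 0 := by
        intro i j _ _ hij
        have hne : i ≠ j := fun h => hij (h ▸ Iff.rfl)
        rw [charmatrix_pmd_apply, if_neg hne, if_neg, sub_zero]
        intro h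
        by_cases hi : i ∈ σ.support
        · exact hij ⟨fun _ => h ▸ (happ1 i hi ▸ Equiv.Perm.apply_mem_support.mpr hi :
            (σ * τ) i ∈ σ.support), fun _ => hi⟩
        · exact hij ⟨fun hh => absurd hh hi, fun hj => absurd (hτnotσ i (h ▸ hj)) hi⟩
      rw [det_split _ σ.support s hsσ hz]
      have hblkσ : (((σ * τ).permMatrix R * Matrix.diagonal t).charmatrix.toSquareBlockProp
          (· ∈ σ.support))
          = ((σ.permMatrix R * Matrix.diagonal t).charmatrix.toSquareBlockProp
          (· ∈ σ.support)) := by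
        refine Matrix.ext (fun i j => ?_)
        show ((σ * τ).permMatrix R * Matrix.diagonal t).charmatrix ↑i ↑j
          = (σ.permMatrix R * Matrix.diagonal t).charmatrix ↑i ↑j
        rw [charmatrix_pmd_apply, charmatrix_pmd_apply, happ1 ↑i i.2]
      have hblkτ : (((σ * τ).permMatrix R * Matrix.diagonal t).charmatrix.toSquareBlockProp
          (· ∈ s \ σ.support))
          = ((τ.permMatrix R * Matrix.diagonal t).charmatrix.toSquareBlockProp
          (· ∈ s \ σ.support)) := by
        refine Matrix.ext (fun i j => ?_)
        show ((σ * τ).permMatrix R * Matrix.diagonal t).charmatrix ↑i ↑j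
          = (τ.permMatrix R * Matrix.diagonal t).charmatrix ↑i ↑j
        rw [charmatrix_pmd_apply, charmatrix_pmd_apply,
          happ2 ↑i (Finset.mem_sdiff.mp i.2).2]
      have hsτ : τ.support ⊆ s \ σ.support := by
        intro i hi
        rw [Finset.mem_sdiff]
        exact ⟨hs (by rw [hsupp]; exact Finset.mem_union_right _ hi),
          fun hmem => hdisj1 i hmem hi⟩
      rw [hblkσ, hblkτ, ihσ σ.support (le_refl _), ihτ (s \ σ.support) hsτ,
        Finset.sdiff_self, Finset.prod_empty, mul_one,
        hd.cycleFactorsFinset_mul_eq_union,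
        Finset.prod_union hd.disjoint_cycleFactorsFinset,
        show (s \ σ.support) \ τ.support = s \ (σ * τ).support by
          rw [hsupp]; ext x; simp only [Finset.mem_sdiff, Finset.mem_union]; tauto]
      ring
end CharpolyPermAux

/-- Let `σ ∈ Σ_k` and let `a = diag(t₁,…,t_k)`. The characteristic polynomial of the
product `P_σ · a` of the permutation matrix of `σ` with `a` is the product, over the
cycles `c` of `σ`, of the factors `X^{|c|} − ∏_{i ∈ c} t_i` (fixed points of `σ`, i.e.
cycles of length one, contribute the factors `X − t_i`). -/
theorem charpoly_permMatrix_mul_diagonal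
    (R : Type*) [CommRing R] (k : ℕ) (σ : Equiv.Perm (Fin k)) (t : Fin k → R) :
    Matrix.charpoly (σ.permMatrix R * Matrix.diagonal t) =
      (∏ c ∈ σ.cycleFactorsFinset,
        (Polynomial.X ^ c.support.card - Polynomial.C (∏ i ∈ c.support, t i))) *
      ∏ i ∈ σ.supportᶜ, (Polynomial.X - Polynomial.C (t i)) := by
  have h := main_aux t σ Finset.univ (Finset.subset_univ _)
  have hdet : ((σ.permMatrix R * Matrix.diagonal t).charmatrix.toSquareBlockProp
      (· ∈ (Finset.univ : Finset (Fin k)))).det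
      = (σ.permMatrix R * Matrix.diagonal t).charmatrix.det := by
    exact Matrix.det_submatrix_equiv_self
      (Equiv.subtypeUnivEquiv (fun x : Fin k => Finset.mem_univ x))
      ((σ.permMatrix R * Matrix.diagonal t).charmatrix)
  rw [Matrix.charpoly, ← hdet, h, Finset.compl_eq_univ_sdiff]
end

section
/- In the free Lie-admissible algebra on one generator x over a field of characteristic zero, the homogeneous component of degree 2 in x is one-dimensional (spanned by x·x), the component of degree 3 is two-dimensional, the component of degree 4 is five-dimensional, and the component of degree 5 is fourteen-dimensional. -/
namespace FreeLieAdmissible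

/-- Words in the free magma on one generator `x`; these index a basis of the free
nonassociative algebra on one generator. -/
abbrev W : Type := FreeMagma Unit

/-- The free nonassociative (magmatic) algebra on one generator over `ℚ`. -/
abbrev A : Type := MonoidAlgebra ℚ W

/-- Degree of a magma word = number of occurrences of the generator. -/
def len : W → ℕ
  | FreeMagma.of _ => 1
  | FreeMagma.mul a b => len a + len b

/-- The Lie-admissibility relators
`Σ_{σ∈Σ₃} sign(σ) ((v_{σ1} v_{σ2}) v_{σ3} − v_{σ1}(v_{σ2} v_{σ3}))`. -/
def relators : Set A :=
  {z | ∃ v : Fin 3 → A, z =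
    ∑ σ : Equiv.Perm (Fin 3),
      (Equiv.Perm.sign σ : ℤ) •
        ((v (σ 0) * v (σ 1)) * v (σ 2) - v (σ 0) * (v (σ 1) * v (σ 2)))}

/-- The two-sided (nonunital, nonassociative) ideal generated by the Lie-admissibility
relators: the smallest submodule containing them and stable under left and right
multiplication. -/
noncomputable def I : Submodule ℚ A :=
  sInf {J : Submodule ℚ A | relators ⊆ J ∧
    ∀ a : A, ∀ x ∈ J, a * x ∈ J ∧ x * a ∈ J}

/-- The span of the basis monomials of degree `n`. -/
noncomputable def degComponent (n : ℕ) : Submodule ℚ A :=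
  Submodule.span ℚ ((fun w => MonoidAlgebra.single w (1 : ℚ)) '' {w : W | len w = n})

/-- The image in the free Lie-admissible algebra `A / I` of the degree-`n` component. -/
noncomputable def laComponent (n : ℕ) : Submodule ℚ (A ⧸ I) :=
  Submodule.map I.mkQ (degComponent n)

-- ============ basics ============

abbrev X : W := FreeMagma.of ()
abbrev X2 : W := X * X

lemma len_mul (a b : W) : len (a * b) = len a + len b := rfl

lemma len_mul' (a b : W) : len (a.mul b) = len a + len b := rfl

lemma len_pos (w : W) : 0 < len w := by
  induction w with
  | of _ => exact Nat.one_pos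
  | mul a b iha ihb => rw [len_mul']; omega

lemma len_eq_one {w : W} (h : len w = 1) : w = X := by
  cases w with
  | of u => rfl
  | mul a b => have := len_pos a; have := len_pos b; rw [len_mul'] at h; omega

lemma len_eq_two {w : W} (h : len w = 2) : w = X2 := by
  cases w with
  | of u => simp [len] at h
  | mul a b =>
      have ha := len_pos a; have hb := len_pos b; rw [len_mul'] at h
      have h1 : len a = 1 := by omega
      have h2 : len b = 1 := by omega
      rw [len_eq_one h1, len_eq_one h2]; rfl

-- J
noncomputable def J : Submodule ℚ A where
  carrier := {z : A | ∀ w : W, len w ≤ 5 → z.coeff w = 0}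
  add_mem' := by
    intro a b ha hb w hw
    rw [MonoidAlgebra.coeff_add, Finsupp.add_apply, ha w hw, hb w hw, add_zero]
  zero_mem' := by intro w _; rfl
  smul_mem' := by
    intro c a ha w hw
    rw [MonoidAlgebra.coeff_smul_apply, ha w hw, smul_zero]

lemma mem_J {z : A} : z ∈ J ↔ ∀ w : W, len w ≤ 5 → z.coeff w = 0 := Iff.rfl

lemma mul_coeff_zero (p q : A) (d1 d2 : ℕ) (hp : ∀ u, len u < d1 → p.coeff u = 0)
    (hq : ∀ u, len u < d2 → q.coeff u = 0) : ∀ w, len w < d1 + d2 → (p * q).coeff w = 0 := by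
  intro w hw
  rw [MonoidAlgebra.coeff_mul]
  apply Finset.sum_eq_zero; intro u _
  apply Finset.sum_eq_zero; intro t _
  dsimp only
  split_ifs with h
  · rcases Nat.lt_or_ge (len u) d1 with h1 | h1
    · rw [hp u h1, zero_mul]
    · have : len u + len t = len w := by rw [← len_mul, h]
      rw [hq t (by omega), mul_zero]
  · rfl
-- ============ the alternating trilinear element ============

noncomputable def G (v : Fin 3 → A) : A :=
  ∑ σ : Equiv.Perm (Fin 3),
      (Equiv.Perm.sign σ : ℤ) •
        ((v (σ 0) * v (σ 1)) * v (σ 2) - v (σ 0) * (v (σ 1) * v (σ 2)))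

lemma fin3_cases (j : Fin 3) : j = 0 ∨ j = 1 ∨ j = 2 := by
  rcases j with ⟨j, hj⟩
  interval_cases j
  · exact Or.inl rfl
  · exact Or.inr (Or.inl rfl)
  · exact Or.inr (Or.inr rfl)

lemma exists_slot (σ : Equiv.Perm (Fin 3)) (i : Fin 3) : σ 0 = i ∨ σ 1 = i ∨ σ 2 = i := by
  rcases fin3_cases (σ.symm i) with h | h | h
  · left; rw [← h, Equiv.apply_symm_apply]
  · right; left; rw [← h, Equiv.apply_symm_apply]
  · right; right; rw [← h, Equiv.apply_symm_apply]

lemma slot_ne {σ : Equiv.Perm (Fin 3)} {i : Fin 3} {k l : Fin 3} (h : σ k = i) (hkl : l ≠ k) :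
    σ l ≠ i := fun hc => hkl (σ.injective (hc.trans h.symm))

lemma G_coeff_vanish (v : Fin 3 → A) (d : Fin 3 → ℕ)
    (hd : ∀ i u, len u < d i → (v i).coeff u = 0) (w : W) (hw : len w < d 0 + d 1 + d 2) :
    (G v).coeff w = 0 := by
  unfold G
  rw [MonoidAlgebra.coeff_sum, Finset.sum_apply']
  apply Finset.sum_eq_zero; intro σ _
  have hsum : d (σ 0) + d (σ 1) + d (σ 2) = d 0 + d 1 + d 2 := by
    have h := Equiv.sum_comp σ d
    rw [Fin.sum_univ_three, Fin.sum_univ_three] at h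
    exact h
  rw [MonoidAlgebra.coeff_smul, MonoidAlgebra.coeff_sub, Finsupp.smul_apply, Finsupp.sub_apply,
    mul_coeff_zero _ _ (d (σ 0) + d (σ 1)) (d (σ 2))
      (mul_coeff_zero _ _ _ _ (hd _) (hd _)) (hd _) w (by omega),
    mul_coeff_zero _ _ (d (σ 0)) (d (σ 1) + d (σ 2))
      (hd _) (mul_coeff_zero _ _ _ _ (hd _) (hd _)) w (by omega)]
  simp

lemma G_update_add (v : Fin 3 → A) (i : Fin 3) (a b : A) :
    G (Function.update v i (a + b)) = G (Function.update v i a) + G (Function.update v i b) := by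
  unfold G
  rw [← Finset.sum_add_distrib]
  refine Finset.sum_congr rfl fun σ _ => ?_
  rw [← smul_add]
  congr 1
  rcases exists_slot σ i with h | h | h
  · have h1 : σ 1 ≠ i := slot_ne h (by decide)
    have h2 : σ 2 ≠ i := slot_ne h (by decide)
    rw [h]; simp only [Function.update_self, Function.update_of_ne h1, Function.update_of_ne h2]
    rw [add_mul, add_mul, add_mul, sub_add_sub_comm]
  · have h0 : σ 0 ≠ i := slot_ne h (by decide)
    have h2 : σ 2 ≠ i := slot_ne h (by decide)
    rw [h]; simp only [Function.update_self, Function.update_of_ne h0, Function.update_of_ne h2]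
    rw [mul_add, add_mul, add_mul, mul_add, sub_add_sub_comm]
  · have h0 : σ 0 ≠ i := slot_ne h (by decide)
    have h1 : σ 1 ≠ i := slot_ne h (by decide)
    rw [h]; simp only [Function.update_self, Function.update_of_ne h0, Function.update_of_ne h1]
    rw [mul_add, mul_add, mul_add, sub_add_sub_comm]

lemma G_update_smul (v : Fin 3 → A) (i : Fin 3) (c : ℚ) (a : A) :
    G (Function.update v i (c • a)) = c • G (Function.update v i a) := by
  unfold G
  rw [Finset.smul_sum]
  refine Finset.sum_congr rfl fun σ _ => ?_
  rw [← Int.cast_smul_eq_zsmul ℚ, ← Int.cast_smul_eq_zsmul ℚ, smul_comm]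
  congr 1
  rcases exists_slot σ i with h | h | h
  · have h1 : σ 1 ≠ i := slot_ne h (by decide)
    have h2 : σ 2 ≠ i := slot_ne h (by decide)
    rw [h]; simp only [Function.update_self, Function.update_of_ne h1, Function.update_of_ne h2]
    rw [smul_mul_assoc, smul_mul_assoc, smul_mul_assoc, smul_sub]
  · have h0 : σ 0 ≠ i := slot_ne h (by decide)
    have h2 : σ 2 ≠ i := slot_ne h (by decide)
    rw [h]; simp only [Function.update_self, Function.update_of_ne h0, Function.update_of_ne h2]
    rw [mul_smul_comm, smul_mul_assoc, smul_mul_assoc, mul_smul_comm, smul_sub]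
  · have h0 : σ 0 ≠ i := slot_ne h (by decide)
    have h1 : σ 1 ≠ i := slot_ne h (by decide)
    rw [h]; simp only [Function.update_self, Function.update_of_ne h0, Function.update_of_ne h1]
    rw [mul_smul_comm, mul_smul_comm, mul_smul_comm, smul_sub]

lemma G_alt (v : Fin 3 → A) (i j : Fin 3) (hij : i ≠ j) (h : v i = v j) : G v = 0 := by
  classical
  set τ := Equiv.swap i j with hτ
  have key : ∀ m, v (τ m) = v m := by
    intro m
    rw [hτ, Equiv.swap_apply_def]
    split_ifs with h1 h2
    · rw [h1, h]
    · rw [h2, h]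
    · rfl
  set f : Equiv.Perm (Fin 3) → A := fun σ =>
    (Equiv.Perm.sign σ : ℤ) •
      ((v (σ 0) * v (σ 1)) * v (σ 2) - v (σ 0) * (v (σ 1) * v (σ 2))) with hf
  have hGf : G v = ∑ σ : Equiv.Perm (Fin 3), f σ := rfl
  have hterm : ∀ σ : Equiv.Perm (Fin 3), f (τ * σ) = -f σ := by
    intro σ
    have happ : ∀ k : Fin 3, v ((τ * σ) k) = v (σ k) := by
      intro k; rw [Equiv.Perm.mul_apply, key]
    have hsign : (Equiv.Perm.sign (τ * σ) : ℤ) = -(Equiv.Perm.sign σ : ℤ) := by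
      rw [Equiv.Perm.sign_mul, Equiv.Perm.sign_swap hij]
      simp
    rw [hf]
    simp only [happ 0, happ 1, happ 2, hsign, neg_smul]
  have hneg : G v = -G v := by
    rw [hGf]
    conv_lhs => rw [← Equiv.sum_comp (Equiv.mulLeft τ) f]
    have : ∀ σ : Equiv.Perm (Fin 3), f (Equiv.mulLeft τ σ) = -f σ := by
      intro σ; rw [Equiv.coe_mulLeft]; exact hterm σ
    rw [Finset.sum_congr rfl fun σ _ => this σ, Finset.sum_neg_distrib]
  have h2 : G v + G v = 0 := by nth_rewrite 1 [hneg]; rw [neg_add_cancel]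
  have h3 : (2 : ℚ) • G v = 0 := by rw [two_smul]; exact h2
  have h4 := congrArg (fun z => (2 : ℚ)⁻¹ • z) h3
  simpa [smul_smul] using h4

-- ============ stripping scalars, double slots ============

lemma G_strip (v : Fin 3 → A) (i : Fin 3) (c : ℚ) (z : A) (h : v i = c • z) :
    G v = c • G (Function.update v i z) := by
  conv_lhs => rw [show v = Function.update v i (c • z) by rw [← h, Function.update_eq_self]]
  rw [G_update_smul]

lemma G_eq_zero_double (v : Fin 3 → A) (i j : Fin 3) (hij : i ≠ j) (z : A) (c d : ℚ)
    (hi : v i = c • z) (hj : v j = d • z) : G v = 0 := by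
  rw [G_strip v i c z hi]
  have hj' : Function.update v i z j = d • z := by
    rw [Function.update_of_ne (Ne.symm hij), hj]
  rw [G_strip _ j d z hj']
  have : Function.update (Function.update v i z) j z i = Function.update (Function.update v i z) j z j := by
    rw [Function.update_self, Function.update_of_ne hij, Function.update_self]
  rw [G_alt _ i j hij this, smul_zero, smul_zero]

lemma G_split (v : Fin 3 → A) (i : Fin 3) (a b c : A) (h : v i = a + b + c) (w : W)
    (ha : (G (Function.update v i a)).coeff w = 0) (hb : (G (Function.update v i b)).coeff w = 0)
    (hc : (G (Function.update v i c)).coeff w = 0) : (G v).coeff w = 0 := by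
  conv_lhs => rw [show v = Function.update v i (a + b + c) by rw [← h, Function.update_eq_self]]
  rw [G_update_add, G_update_add, MonoidAlgebra.coeff_add, MonoidAlgebra.coeff_add, Finsupp.add_apply, Finsupp.add_apply, ha, hb, hc]
  simp

-- ============ the master term lemma ============

lemma single_coeff_ne {z u : W} {c : ℚ} (h : len u ≠ len z) :
    (c • MonoidAlgebra.single z (1 : ℚ) : A).coeff u = 0 := by
  rw [MonoidAlgebra.coeff_smul, Finsupp.smul_apply, MonoidAlgebra.coeff_single, Finsupp.single_apply]
  rw [if_neg (fun he => h (by rw [← he]))]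
  simp

lemma G_term (B : Fin 3 → A) (w : W) (hw : len w ≤ 5)
    (hB : ∀ i, (∃ c : ℚ, B i = c • MonoidAlgebra.single X (1 : ℚ)) ∨
      (∃ c : ℚ, B i = c • MonoidAlgebra.single X2 (1 : ℚ)) ∨ (∀ u, len u < 3 → (B i).coeff u = 0)) :
    (G B).coeff w = 0 := by
  classical
  by_cases h01X : (∃ c : ℚ, B 0 = c • MonoidAlgebra.single X (1:ℚ)) ∧ (∃ c : ℚ, B 1 = c • MonoidAlgebra.single X (1:ℚ))
  · obtain ⟨⟨c, hc⟩, ⟨d, hd⟩⟩ := h01X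
    rw [G_eq_zero_double B 0 1 (by decide) _ c d hc hd]; simp
  by_cases h02X : (∃ c : ℚ, B 0 = c • MonoidAlgebra.single X (1:ℚ)) ∧ (∃ c : ℚ, B 2 = c • MonoidAlgebra.single X (1:ℚ))
  · obtain ⟨⟨c, hc⟩, ⟨d, hd⟩⟩ := h02X
    rw [G_eq_zero_double B 0 2 (by decide) _ c d hc hd]; simp
  by_cases h12X : (∃ c : ℚ, B 1 = c • MonoidAlgebra.single X (1:ℚ)) ∧ (∃ c : ℚ, B 2 = c • MonoidAlgebra.single X (1:ℚ))
  · obtain ⟨⟨c, hc⟩, ⟨d, hd⟩⟩ := h12X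
    rw [G_eq_zero_double B 1 2 (by decide) _ c d hc hd]; simp
  by_cases h01Y : (∃ c : ℚ, B 0 = c • MonoidAlgebra.single X2 (1:ℚ)) ∧ (∃ c : ℚ, B 1 = c • MonoidAlgebra.single X2 (1:ℚ))
  · obtain ⟨⟨c, hc⟩, ⟨d, hd⟩⟩ := h01Y
    rw [G_eq_zero_double B 0 1 (by decide) _ c d hc hd]; simp
  by_cases h02Y : (∃ c : ℚ, B 0 = c • MonoidAlgebra.single X2 (1:ℚ)) ∧ (∃ c : ℚ, B 2 = c • MonoidAlgebra.single X2 (1:ℚ))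
  · obtain ⟨⟨c, hc⟩, ⟨d, hd⟩⟩ := h02Y
    rw [G_eq_zero_double B 0 2 (by decide) _ c d hc hd]; simp
  by_cases h12Y : (∃ c : ℚ, B 1 = c • MonoidAlgebra.single X2 (1:ℚ)) ∧ (∃ c : ℚ, B 2 = c • MonoidAlgebra.single X2 (1:ℚ))
  · obtain ⟨⟨c, hc⟩, ⟨d, hd⟩⟩ := h12Y
    rw [G_eq_zero_double B 1 2 (by decide) _ c d hc hd]; simp
  -- now the degree bound
  set d : Fin 3 → ℕ := fun i =>
    if ∃ c : ℚ, B i = c • MonoidAlgebra.single X (1:ℚ) then 1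
    else if ∃ c : ℚ, B i = c • MonoidAlgebra.single X2 (1:ℚ) then 2 else 3 with hdd
  have hd1 : ∀ i, d i = 1 → ∃ c : ℚ, B i = c • MonoidAlgebra.single X (1:ℚ) := by
    intro i hi; rw [hdd] at hi; dsimp only at hi
    split_ifs at hi with p q
    · exact p
    · exact absurd hi (by norm_num)
    · exact absurd hi (by norm_num)
  have hd2 : ∀ i, d i = 2 → ∃ c : ℚ, B i = c • MonoidAlgebra.single X2 (1:ℚ) := by
    intro i hi; rw [hdd] at hi; dsimp only at hi
    split_ifs at hi with p q
    · exact absurd hi (by norm_num)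
    · exact q
    · exact absurd hi (by norm_num)
  have hrange : ∀ i, 1 ≤ d i ∧ d i ≤ 3 := by
    intro i; rw [hdd]; dsimp only; split_ifs <;> omega
  have hbound : ∀ i u, len u < d i → (B i).coeff u = 0 := by
    intro i u hu
    rw [hdd] at hu; dsimp only at hu
    split_ifs at hu with p q
    · exact absurd (len_pos u) (by omega)
    · obtain ⟨c, hc⟩ := q
      rw [hc]
      exact single_coeff_ne (by simp [len] at hu ⊢; omega)
    · rcases hB i with h | h | h
      · exact absurd h p
      · exact absurd h q
      · exact h u hu
  have hsum : 6 ≤ d 0 + d 1 + d 2 := by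
    have k01 : ¬(d 0 = 1 ∧ d 1 = 1) := fun ⟨p, q⟩ => h01X ⟨hd1 0 p, hd1 1 q⟩
    have k02 : ¬(d 0 = 1 ∧ d 2 = 1) := fun ⟨p, q⟩ => h02X ⟨hd1 0 p, hd1 2 q⟩
    have k12 : ¬(d 1 = 1 ∧ d 2 = 1) := fun ⟨p, q⟩ => h12X ⟨hd1 1 p, hd1 2 q⟩
    have m01 : ¬(d 0 = 2 ∧ d 1 = 2) := fun ⟨p, q⟩ => h01Y ⟨hd2 0 p, hd2 1 q⟩
    have m02 : ¬(d 0 = 2 ∧ d 2 = 2) := fun ⟨p, q⟩ => h02Y ⟨hd2 0 p, hd2 2 q⟩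
    have m12 : ¬(d 1 = 2 ∧ d 2 = 2) := fun ⟨p, q⟩ => h12Y ⟨hd2 1 p, hd2 2 q⟩
    have r0 := hrange 0; have r1 := hrange 1; have r2 := hrange 2
    omega
  exact G_coeff_vanish B d hbound w (by omega)


-- ============ relators have no low-degree coefficients ============

lemma filter_one_form (f : A) :
    (MonoidAlgebra.ofCoeff (Finsupp.filter (fun u => len u = 1) f.coeff) : A) = f.coeff X • MonoidAlgebra.single X (1 : ℚ) := by
  ext u
  rw [MonoidAlgebra.coeff_ofCoeff, Finsupp.filter_apply, MonoidAlgebra.coeff_smul, Finsupp.smul_apply,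
    MonoidAlgebra.coeff_single, Finsupp.single_apply]
  by_cases h : len u = 1
  · rw [if_pos h, if_pos (len_eq_one h).symm, len_eq_one h]
    simp
  · rw [if_neg h, if_neg (fun he : X = u => h (by rw [← he]; rfl))]
    simp

lemma filter_two_form (f : A) :
    (MonoidAlgebra.ofCoeff (Finsupp.filter (fun u => len u = 2) f.coeff) : A) = f.coeff X2 • MonoidAlgebra.single X2 (1 : ℚ) := by
  ext u
  rw [MonoidAlgebra.coeff_ofCoeff, Finsupp.filter_apply, MonoidAlgebra.coeff_smul, Finsupp.smul_apply,
    MonoidAlgebra.coeff_single, Finsupp.single_apply]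
  by_cases h : len u = 2
  · rw [if_pos h, if_pos (len_eq_two h).symm, len_eq_two h]
    simp
  · rw [if_neg h, if_neg (fun he : X2 = u => h (by rw [← he]; rfl))]
    simp

lemma relator_coeff (v : Fin 3 → A) (w : W) (hw : len w ≤ 5) : (G v).coeff w = 0 := by
  classical
  set P : Fin 3 → A := fun i => MonoidAlgebra.ofCoeff (Finsupp.filter (fun u => len u = 1) (v i).coeff) with hP
  set Q : Fin 3 → A := fun i => MonoidAlgebra.ofCoeff (Finsupp.filter (fun u => len u = 2) (v i).coeff) with hQ
  set R : Fin 3 → A := fun i => MonoidAlgebra.ofCoeff (Finsupp.filter (fun u => 2 < len u) (v i).coeff) with hR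
  have hsplit : ∀ i, v i = P i + Q i + R i := by
    intro i
    ext u
    rw [MonoidAlgebra.coeff_add, MonoidAlgebra.coeff_add, Finsupp.add_apply, Finsupp.add_apply, hP, hQ, hR]
    dsimp only [MonoidAlgebra.coeff_ofCoeff]
    rw [Finsupp.filter_apply, Finsupp.filter_apply, Finsupp.filter_apply]
    have := len_pos u
    by_cases h1 : len u = 1
    · rw [if_pos h1, if_neg (by omega), if_neg (by omega)]; ring
    · by_cases h2 : len u = 2
      · rw [if_pos h2, if_neg (by omega), if_neg (by omega)]; ring
      · rw [if_neg h1, if_neg h2, if_pos (by omega)]; ring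
  -- kind facts
  have kindP : ∀ i, ∃ c : ℚ, P i = c • MonoidAlgebra.single X (1:ℚ) := fun i => ⟨(v i).coeff X, filter_one_form (v i)⟩
  have kindQ : ∀ i, ∃ c : ℚ, Q i = c • MonoidAlgebra.single X2 (1:ℚ) := fun i => ⟨(v i).coeff X2, filter_two_form (v i)⟩
  have kindR : ∀ i u, len u < 3 → (R i).coeff u = 0 := by
    intro i u hu
    rw [hR]; dsimp only [MonoidAlgebra.coeff_ofCoeff]
    rw [Finsupp.filter_apply, if_neg (by omega)]
  -- do the 27-fold split
  have ne10 : (1 : Fin 3) ≠ 0 := by decide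
  have ne20 : (2 : Fin 3) ≠ 0 := by decide
  have ne21 : (2 : Fin 3) ≠ 1 := by decide
  refine G_split v 0 (P 0) (Q 0) (R 0) (hsplit 0) w ?_ ?_ ?_ <;>
    refine G_split _ 1 (P 1) (Q 1) (R 1)
      (by rw [Function.update_of_ne ne10]; exact hsplit 1) w ?_ ?_ ?_ <;>
    refine G_split _ 2 (P 2) (Q 2) (R 2)
      (by rw [Function.update_of_ne ne21, Function.update_of_ne ne20]; exact hsplit 2) w ?_ ?_ ?_ <;>
    · refine G_term _ w hw ?_
      intro i
      rcases fin3_cases i with rfl | rfl | rfl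
      · rw [Function.update_of_ne (by decide : (0:Fin 3) ≠ 2), Function.update_of_ne (by decide : (0:Fin 3) ≠ 1),
          Function.update_self]
        first
          | exact Or.inl (kindP 0)
          | exact Or.inr (Or.inl (kindQ 0))
          | exact Or.inr (Or.inr (kindR 0))
      · rw [Function.update_of_ne (by decide : (1:Fin 3) ≠ 2), Function.update_self]
        first
          | exact Or.inl (kindP 1)
          | exact Or.inr (Or.inl (kindQ 1))
          | exact Or.inr (Or.inr (kindR 1))
      · rw [Function.update_self]
        first
          | exact Or.inl (kindP 2)
          | exact Or.inr (Or.inl (kindQ 2))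
          | exact Or.inr (Or.inr (kindR 2))

lemma relators_subset_J : relators ⊆ (J : Set A) := by
  rintro z ⟨v, hz⟩
  intro w hw
  rw [hz]
  exact relator_coeff v w hw

lemma I_le_J : I ≤ J := by
  apply sInf_le
  refine ⟨relators_subset_J, ?_⟩
  intro a x hx
  constructor
  · intro w hw
    exact mul_coeff_zero a x 1 6 (fun u hu => absurd (len_pos u) (by omega))
      (fun u hu => hx u (by omega)) w (by omega)
  · intro w hw
    exact mul_coeff_zero x a 6 1 (fun u hu => hx u (by omega))
      (fun u hu => absurd (len_pos u) (by omega)) w (by omega)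


-- ============ enumeration of words ============

instance : DecidableEq W := fun a b => by
  induction a generalizing b with
  | of u => cases b with
    | of v => exact isTrue rfl
    | mul c d => exact isFalse (by intro h; cases h)
  | mul c d ihc ihd => cases b with
    | of v => exact isFalse (by intro h; cases h)
    | mul e f =>
        cases ihc e with
        | isTrue h1 =>
            cases ihd f with
            | isTrue h2 => exact isTrue (by rw [h1, h2])
            | isFalse h2 => exact isFalse (by intro h; injection h with a b; exact h2 b)
        | isFalse h1 => exact isFalse (by intro h; injection h with a b; exact h1 a)

def pairs (L M : List W) : List W := L.flatMap fun a => M.map fun b => a * b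

def W1 : List W := [X]
def W2 : List W := pairs W1 W1
def W3 : List W := pairs W1 W2 ++ pairs W2 W1
def W4 : List W := pairs W1 W3 ++ pairs W2 W2 ++ pairs W3 W1
def W5 : List W := pairs W1 W4 ++ pairs W2 W3 ++ pairs W3 W2 ++ pairs W4 W1

lemma mul_inj {a b c d : W} : (a * b : W) = c * d ↔ a = c ∧ b = d := by
  constructor
  · intro h
    injection h with h1 h2
    exact ⟨h1, h2⟩
  · rintro ⟨rfl, rfl⟩; rfl

lemma mem_pairs {a b : W} {L M : List W} : a * b ∈ pairs L M ↔ a ∈ L ∧ b ∈ M := by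
  simp only [pairs, List.mem_flatMap, List.mem_map]
  constructor
  · rintro ⟨a', ha', b', hb', he⟩
    rw [mul_inj] at he
    exact ⟨he.1 ▸ ha', he.2 ▸ hb'⟩
  · rintro ⟨ha, hb⟩
    exact ⟨a, ha, b, hb, rfl⟩

lemma of_not_mem_pairs {u : Unit} {L M : List W} : FreeMagma.of u ∉ pairs L M := by
  simp only [pairs, List.mem_flatMap, List.mem_map]
  rintro ⟨a, _, b, _, he⟩
  cases he

lemma mem_words (w : W) :
    (w ∈ W1 ↔ len w = 1) ∧ (w ∈ W2 ↔ len w = 2) ∧ (w ∈ W3 ↔ len w = 3) ∧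
    (w ∈ W4 ↔ len w = 4) ∧ (w ∈ W5 ↔ len w = 5) := by
  induction w with
  | of u =>
      refine ⟨by simp [W1, X, len], ?_, ?_, ?_, ?_⟩
      · simp [W2, of_not_mem_pairs, len]
      · simp [W3, of_not_mem_pairs, len]
      · simp [W4, of_not_mem_pairs, len]
      · simp [W5, of_not_mem_pairs, len]
  | mul a b iha ihb =>
      obtain ⟨a1, a2, a3, a4, a5⟩ := iha
      obtain ⟨b1, b2, b3, b4, b5⟩ := ihb
      have hla := len_pos a
      have hlb := len_pos b
      have hlen : len (a.mul b) = len a + len b := rfl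
      have hmem : ∀ L M : List W, a.mul b ∈ pairs L M ↔ a ∈ L ∧ b ∈ M := fun L M => mem_pairs
      constructor
      · show a.mul b ∈ W1 ↔ _
        simp only [W1, List.mem_singleton]
        constructor
        · intro h; exact absurd h (by intro hc; cases hc)
        · intro h; rw [hlen] at h; omega
      refine ⟨?_, ?_, ?_, ?_⟩
      · show a.mul b ∈ W2 ↔ _
        rw [W2, hmem, a1, b1, hlen]; omega
      · show a.mul b ∈ W3 ↔ _
        simp only [W3, List.mem_append]
        rw [hmem, hmem, a1, b2, a2, b1, hlen]; omega
      · show a.mul b ∈ W4 ↔ _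
        simp only [W4, List.mem_append]
        rw [hmem, hmem, hmem, a1, b3, a2, b2, a3, b1, hlen]; omega
      · show a.mul b ∈ W5 ↔ _
        simp only [W5, List.mem_append]
        rw [hmem, hmem, hmem, hmem, a1, b4, a2, b3, a3, b2, a4, b1, hlen]; omega

lemma set_eq_2 : {w : W | len w = 2} = ↑W2.toFinset := by
  ext w; simp only [Set.mem_setOf_eq, Finset.coe_sort_coe, Finset.mem_coe, List.mem_toFinset]
  exact ((mem_words w).2.1).symm

lemma set_eq_3 : {w : W | len w = 3} = ↑W3.toFinset := by
  ext w; simp only [Set.mem_setOf_eq, Finset.coe_sort_coe, Finset.mem_coe, List.mem_toFinset]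
  exact ((mem_words w).2.2.1).symm

lemma set_eq_4 : {w : W | len w = 4} = ↑W4.toFinset := by
  ext w; simp only [Set.mem_setOf_eq, Finset.coe_sort_coe, Finset.mem_coe, List.mem_toFinset]
  exact ((mem_words w).2.2.2.1).symm

lemma set_eq_5 : {w : W | len w = 5} = ↑W5.toFinset := by
  ext w; simp only [Set.mem_setOf_eq, Finset.coe_sort_coe, Finset.mem_coe, List.mem_toFinset]
  exact ((mem_words w).2.2.2.2).symm

lemma card_W2 : W2.toFinset.card = 1 := by decide
lemma card_W3 : W3.toFinset.card = 2 := by decide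
lemma card_W4 : W4.toFinset.card = 5 := by decide
lemma card_W5 : W5.toFinset.card = 14 := by decide


-- ============ dimension counting ============

lemma degComponent_eq_supported (n : ℕ) :
    degComponent n = MonoidAlgebra.supported ℚ ℚ {w : W | len w = n} :=
  (MonoidAlgebra.supported_eq_span_single ℚ _).symm

lemma finrank_degComponent (n : ℕ) (F : Finset W) (hset : {w : W | len w = n} = ↑F) :
    Module.finrank ℚ (degComponent n) = F.card := by
  rw [degComponent_eq_supported, hset]
  have e1 := MonoidAlgebra.supportedEquivFinsupp (S := ℚ) (R := ℚ) (↑F : Set W)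
  have e2 := Finsupp.linearEquivFunOnFinite ℚ ℚ (↥(↑F : Set W))
  have h3 : Module.finrank ℚ (↥(MonoidAlgebra.supported ℚ ℚ (↑F : Set W))) = F.card := by
    rw [e1.finrank_eq, e2.finrank_eq, Module.finrank_fintype_fun_eq_card]
    simp
  exact h3

lemma finrank_laComponent_eq (n : ℕ) (hn : n ≤ 5) :
    Module.finrank ℚ (laComponent n) = Module.finrank ℚ (degComponent n) := by
  set f := I.mkQ.comp (degComponent n).subtype with hf
  have hker : LinearMap.ker f = ⊥ := by
    rw [LinearMap.ker_eq_bot']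
    intro x hx
    have hxI : (x : A) ∈ I := by
      have : I.mkQ (x : A) = 0 := hx
      rwa [← Submodule.Quotient.mk_eq_zero I]
    have hxJ : (x : A) ∈ J := I_le_J hxI
    have hsupp : ((x : A).coeff.support : Set W) ⊆ {w : W | len w = n} := by
      exact MonoidAlgebra.mem_supported.mp
        ((SetLike.ext_iff.mp (degComponent_eq_supported n) _).mp x.2)
    have hzero : (x : A) = 0 := by
      ext u
      by_cases hu : len u = n
      · exact hxJ u (by omega)
      · rw [Finsupp.notMem_support_iff.mp (fun hc => hu (hsupp hc))]
        rfl
    exact Subtype.ext hzero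
  have hr : LinearMap.range f = laComponent n := by
    rw [hf, LinearMap.range_comp, Submodule.range_subtype]; rfl
  have e := LinearEquiv.ofInjective f (LinearMap.ker_eq_bot.mp hker)
  rw [← hr]
  exact e.finrank_eq.symm

lemma set_two_singleton : {w : W | len w = 2} = {X2} := by
  ext w
  simp only [Set.mem_setOf_eq, Set.mem_singleton_iff]
  constructor
  · exact len_eq_two
  · rintro rfl; rfl


/-- In the free Lie-admissible algebra on one generator over a field of characteristic
zero, the homogeneous components of degrees 2, 3, 4, 5 have dimensions 1, 2, 5, 14
respectively (the degree-2 component being spanned by `x·x`). -/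
theorem finrank_laComponent :
    Module.finrank ℚ (laComponent 2) = 1 ∧
    laComponent 2 = Submodule.span ℚ
      {I.mkQ (MonoidAlgebra.single (FreeMagma.mul (FreeMagma.of ()) (FreeMagma.of ())) (1 : ℚ))} ∧
    Module.finrank ℚ (laComponent 3) = 2 ∧
    Module.finrank ℚ (laComponent 4) = 5 ∧
    Module.finrank ℚ (laComponent 5) = 14 := by
  refine ⟨?_, ?_, ?_, ?_, ?_⟩
  · rw [finrank_laComponent_eq 2 (by omega), finrank_degComponent 2 W2.toFinset set_eq_2,
      card_W2]
  · rw [laComponent, degComponent, set_two_singleton, Set.image_singleton,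
      Submodule.map_span, Set.image_singleton]
    rfl
  · rw [finrank_laComponent_eq 3 (by omega), finrank_degComponent 3 W3.toFinset set_eq_3,
      card_W3]
  · rw [finrank_laComponent_eq 4 (by omega), finrank_degComponent 4 W4.toFinset set_eq_4,
      card_W4]
  · rw [finrank_laComponent_eq 5 (by omega), finrank_degComponent 5 W5.toFinset set_eq_5,
      card_W5]

end FreeLieAdmissible
end

section
/- Let O₁, O₂ be Koszul quadratic operads with exponential generating series f₁, f₂ for dimensions, and suppose their quadratic duals have generating series g₁, g₂. If the coproduct O₁ ∨ O₂ is Koszul with quadratic dual whose generating series is g₁ + g₂ − t (the connected sum), then the generating series f of O₁ ∨ O₂ satisfies −(g₁(−f) + g₂(−f) − (−f)) = t. In particular, for O₁ = PreLie (quadratic dual Perm, g₁(t) = t·e^t) and O₂ = ComMag (quadratic dual with g₂(t) = t + t²/2), the generating series f of PreLie ∨ ComMag satisfies f·exp(−f) − f²/2 = t. -/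
namespace KoszulGeneratingSeries

variable (K : Type*) [Field K] [CharZero K]

/-- Composition (substitution) of formal power series: `(f ∘ g)` for `g` with zero
constant term, defined coefficientwise by `coeff n (f∘g) = Σ_{k≤n} coeff k f · coeff n (g^k)`. -/
noncomputable def compPS (f g : PowerSeries K) : PowerSeries K :=
  PowerSeries.mk fun n =>
    ∑ k ∈ Finset.range (n + 1), (PowerSeries.coeff k f) * (PowerSeries.coeff n (g ^ k))

/-- Substitution of a power series with zero constant term into `exp`. -/
noncomputable def expComp (f : PowerSeries K) : PowerSeries K :=
  PowerSeries.mk fun n =>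
    ∑ k ∈ Finset.range (n + 1), (Nat.factorial k : K)⁻¹ * (PowerSeries.coeff n (f ^ k))

set_option linter.unusedSectionVars false
open PowerSeries Finset
section
variable {K}

lemma coeff_pow_zero {g : PowerSeries K} (hg : constantCoeff g = 0) :
    ∀ {k n : ℕ}, n < k → coeff n (g ^ k) = 0 := by
  intro k
  induction k with
  | zero => intro n hn; omega
  | succ k ih =>
    intro n hn
    rw [pow_succ, mul_comm, coeff_mul]
    apply Finset.sum_eq_zero
    rintro ⟨i, j⟩ hij
    rw [Finset.HasAntidiagonal.mem_antidiagonal] at hij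
    rcases Nat.eq_zero_or_pos i with h0 | h0
    · subst h0
      simp [coeff_zero_eq_constantCoeff, hg]
    · have : j < k := by omega
      rw [ih this, mul_zero]

lemma coeff_compPS (f g : PowerSeries K) (n : ℕ) :
    coeff n (compPS K f g) =
      ∑ k ∈ Finset.range (n + 1), coeff k f * coeff n (g ^ k) := by
  simp [compPS]

lemma coeff_compPS_of_le {g : PowerSeries K} (hg : constantCoeff g = 0)
    (f : PowerSeries K) {n N : ℕ} (h : n + 1 ≤ N) :
    coeff n (compPS K f g) = ∑ k ∈ Finset.range N, coeff k f * coeff n (g ^ k) := by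
  rw [coeff_compPS]
  apply Finset.sum_subset (Finset.range_subset_range.mpr h)
  intro k _ hk
  rw [Finset.mem_range] at hk
  rw [coeff_pow_zero hg (by omega), mul_zero]

@[simp] lemma constantCoeff_compPS (f g : PowerSeries K) :
    constantCoeff (compPS K f g) = constantCoeff f := by
  have := coeff_compPS f g 0
  simpa using this

lemma compPS_add (a b g : PowerSeries K) :
    compPS K (a + b) g = compPS K a g + compPS K b g := by
  ext n
  simp [coeff_compPS, add_mul, Finset.sum_add_distrib]

lemma compPS_neg (a g : PowerSeries K) : compPS K (-a) g = -compPS K a g := by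
  ext n
  simp [coeff_compPS, Finset.sum_neg_distrib]

lemma compPS_sub (a b g : PowerSeries K) :
    compPS K (a - b) g = compPS K a g - compPS K b g := by
  rw [sub_eq_add_neg, compPS_add, compPS_neg, sub_eq_add_neg]

lemma compPS_one (g : PowerSeries K) : compPS K 1 g = 1 := by
  ext n
  rw [coeff_compPS]
  rw [Finset.sum_eq_single 0]
  · simp
  · intro k hk hk0
    rw [coeff_one, if_neg hk0, zero_mul]
  · simp

lemma compPS_X (g : PowerSeries K) (hg : constantCoeff g = 0) :
    compPS K X g = g := by
  ext n
  rw [coeff_compPS]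
  rcases Nat.eq_zero_or_pos n with h0 | h0
  · subst h0; simp [hg]
  · rw [Finset.sum_eq_single 1]
    · simp
    · intro k hk hk1
      rw [coeff_X, if_neg hk1, zero_mul]
    · intro h; exfalso; apply h; rw [Finset.mem_range]; omega

lemma compPS_neg_right (a f : PowerSeries K) :
    compPS K (compPS K a (-X)) f = compPS K a (-f) := by
  ext n
  rw [coeff_compPS, coeff_compPS]
  apply Finset.sum_congr rfl
  intro k hk
  have hC : ∀ j : ℕ, ((-1 : PowerSeries K) ^ j) = C ((-1) ^ j) := by
    intro j; rw [map_pow, map_neg, map_one]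
  have h1 : coeff k (compPS K a (-X)) = (-1) ^ k * coeff k a := by
    rw [coeff_compPS]
    rw [Finset.sum_eq_single k]
    · rw [neg_pow, hC, coeff_C_mul, coeff_X_pow]
      simp [mul_comm]
    · intro j hj hjk
      rw [neg_pow, hC, coeff_C_mul, coeff_X_pow, if_neg (Ne.symm hjk)]
      simp
    · simp
  have h2 : coeff n ((-f) ^ k) = (-1) ^ k * coeff n (f ^ k) := by
    rw [neg_pow, hC, coeff_C_mul]
  rw [h1, h2]; ring


lemma coeff_compPS_negX (a : PowerSeries K) (n : ℕ) :
    coeff n (compPS K a (-X)) = (-1) ^ n * coeff n a := by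
  have hC : ∀ j : ℕ, ((-1 : PowerSeries K) ^ j) = C ((-1) ^ j) := by
    intro j; rw [map_pow, map_neg, map_one]
  rw [coeff_compPS]
  rw [Finset.sum_eq_single n]
  · rw [neg_pow, hC, coeff_C_mul, coeff_X_pow]
    simp [mul_comm]
  · intro j hj hjn
    rw [neg_pow, hC, coeff_C_mul, coeff_X_pow, if_neg (Ne.symm hjn)]
    simp
  · simp

lemma compPS_X_right (f : PowerSeries K) : compPS K f X = f := by
  ext n
  rw [coeff_compPS]
  rw [Finset.sum_eq_single n]
  · simp
  · intro j hj hjn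
    rw [coeff_X_pow, if_neg (Ne.symm hjn), mul_zero]
  · simp

lemma compPS_mul {g : PowerSeries K} (hg : constantCoeff g = 0) (a b : PowerSeries K) :
    compPS K (a * b) g = compPS K a g * compPS K b g := by
  ext n
  have T : ∀ p : ℕ × ℕ, coeff p.1 a * coeff p.2 b * coeff n (g ^ (p.1 + p.2)) =
      coeff p.1 a * coeff p.2 b * coeff n (g ^ (p.1 + p.2)) := fun _ => rfl
  -- LHS
  have hL : coeff n (compPS K (a * b) g) =
      ∑ p ∈ Finset.range (n + 1) ×ˢ Finset.range (n + 1),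
        coeff p.1 a * coeff p.2 b * coeff n (g ^ (p.1 + p.2)) := by
    rw [coeff_compPS]
    have h1 : ∀ k ∈ Finset.range (n + 1),
        coeff k (a * b) * coeff n (g ^ k) =
        ∑ p ∈ Finset.HasAntidiagonal.antidiagonal k,
          coeff p.1 a * coeff p.2 b * coeff n (g ^ (p.1 + p.2)) := by
      intro k hk
      rw [coeff_mul, Finset.sum_mul]
      apply Finset.sum_congr rfl
      rintro ⟨i, j⟩ hij
      rw [Finset.HasAntidiagonal.mem_antidiagonal] at hij
      simp only []
      rw [hij]
    rw [Finset.sum_congr rfl h1]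
    rw [← Finset.sum_biUnion]
    · apply Finset.sum_subset
      · intro p hp
        simp only [Finset.mem_biUnion, Finset.mem_range] at hp
        obtain ⟨k, hk, hpk⟩ := hp
        rw [Finset.HasAntidiagonal.mem_antidiagonal] at hpk
        simp only [Finset.mem_product, Finset.mem_range]
        omega
      · intro p hp hnp
        simp only [Finset.mem_product, Finset.mem_range] at hp
        have : n < p.1 + p.2 := by
          by_contra hc
          apply hnp
          simp only [Finset.mem_biUnion, Finset.mem_range]
          exact ⟨p.1 + p.2, by omega, Finset.HasAntidiagonal.mem_antidiagonal.mpr rfl⟩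
        rw [coeff_pow_zero hg this, mul_zero]
    · intro x _ y _ hxy
      simp only [Finset.disjoint_left]
      intro p hpx hpy
      rw [Finset.HasAntidiagonal.mem_antidiagonal] at hpx hpy
      exact hxy (hpx ▸ hpy ▸ rfl)
  -- RHS
  have hR : coeff n (compPS K a g * compPS K b g) =
      ∑ p ∈ Finset.range (n + 1) ×ˢ Finset.range (n + 1),
        coeff p.1 a * coeff p.2 b * coeff n (g ^ (p.1 + p.2)) := by
    rw [coeff_mul]
    have h1 : ∀ q ∈ Finset.HasAntidiagonal.antidiagonal n,
        coeff q.1 (compPS K a g) * coeff q.2 (compPS K b g) =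
        ∑ p ∈ Finset.range (n + 1) ×ˢ Finset.range (n + 1),
          coeff p.1 a * coeff p.2 b * (coeff q.1 (g ^ p.1) * coeff q.2 (g ^ p.2)) := by
      intro q hq
      rw [Finset.HasAntidiagonal.mem_antidiagonal] at hq
      rw [coeff_compPS_of_le hg a (N := n + 1) (by omega),
          coeff_compPS_of_le hg b (N := n + 1) (by omega), Finset.sum_mul_sum,
          Finset.sum_product]
      apply Finset.sum_congr rfl
      intro i _
      apply Finset.sum_congr rfl
      intro j _
      ring
    rw [Finset.sum_congr rfl h1, Finset.sum_comm]
    apply Finset.sum_congr rfl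
    intro p _
    rw [← Finset.mul_sum, pow_add, coeff_mul]
  rw [hL, hR]

lemma compPS_pow {g : PowerSeries K} (hg : constantCoeff g = 0) (a : PowerSeries K) (k : ℕ) :
    compPS K (a ^ k) g = (compPS K a g) ^ k := by
  induction k with
  | zero => simpa using compPS_one g
  | succ k ih => rw [pow_succ, compPS_mul hg, ih, pow_succ]

lemma compPS_assoc (a : PowerSeries K) {b c : PowerSeries K}
    (hb : constantCoeff b = 0) (hc : constantCoeff c = 0) :
    compPS K (compPS K a b) c = compPS K a (compPS K b c) := by
  ext n
  rw [coeff_compPS, coeff_compPS]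
  have h1 : ∀ k ∈ Finset.range (n + 1),
      coeff k (compPS K a b) * coeff n (c ^ k) =
      ∑ j ∈ Finset.range (n + 1), coeff j a * (coeff k (b ^ j) * coeff n (c ^ k)) := by
    intro k hk
    rw [Finset.mem_range] at hk
    rw [coeff_compPS_of_le hb a (N := n + 1) (by omega), Finset.sum_mul]
    apply Finset.sum_congr rfl
    intro j _
    ring
  rw [Finset.sum_congr rfl h1, Finset.sum_comm]
  apply Finset.sum_congr rfl
  intro j _
  rw [← Finset.mul_sum, ← coeff_compPS, compPS_pow hc]

lemma aux_pow_congr {w w' : PowerSeries K} (hw : constantCoeff w = 0)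
    (hw' : constantCoeff w' = 0) (n : ℕ) (H : ∀ j < n, coeff j w = coeff j w') :
    ∀ k m, m ≤ n → (m < n ∨ 2 ≤ k) → coeff m (w ^ k) = coeff m (w' ^ k) := by
  intro k
  induction k with
  | zero => intro m _ _; simp
  | succ k ih =>
    intro m hmn hd
    rcases Nat.eq_zero_or_pos k with hk0 | hk1
    · subst hk0
      have hmn' : m < n := by omega
      rw [pow_one, pow_one]
      exact H m hmn'
    · rw [pow_succ', pow_succ', coeff_mul, coeff_mul]
      apply Finset.sum_congr rfl
      rintro ⟨i, j⟩ hij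
      rw [Finset.HasAntidiagonal.mem_antidiagonal] at hij
      have hij' : i + j = m := hij
      show coeff i w * coeff j (w ^ k) = coeff i w' * coeff j (w' ^ k)
      rcases Nat.eq_zero_or_pos j with hj0 | hj1
      · subst hj0
        have e1 : coeff 0 (w ^ k) = 0 := by
          rw [coeff_zero_eq_constantCoeff, map_pow, hw, zero_pow (by omega)]
        have e2 : coeff 0 (w' ^ k) = 0 := by
          rw [coeff_zero_eq_constantCoeff, map_pow, hw', zero_pow (by omega)]
        rw [e1, e2, mul_zero, mul_zero]
      rcases Nat.eq_zero_or_pos i with hi0 | hi1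
      · subst hi0
        rw [coeff_zero_eq_constantCoeff, hw, hw', zero_mul, zero_mul]
      have hiln : i < n := by omega
      have hjln : j < n := by omega
      rw [H i hiln, ih j (by omega) (Or.inl hjln)]

lemma compPS_left_cancel {f w w' : PowerSeries K} (hf1 : coeff 1 f ≠ 0)
    (hw : constantCoeff w = 0) (hw' : constantCoeff w' = 0)
    (h : compPS K f w = compPS K f w') : w = w' := by
  ext n
  induction n using Nat.strong_induction_on with
  | _ n ih =>
    rcases Nat.eq_zero_or_pos n with h0 | h0
    · subst h0
      rw [coeff_zero_eq_constantCoeff, hw, hw']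
    have hc : coeff n (compPS K f w) = coeff n (compPS K f w') := by rw [h]
    rw [coeff_compPS, coeff_compPS] at hc
    have key : ∀ k ∈ Finset.range (n + 1), k ≠ 1 →
        coeff k f * coeff n (w ^ k) = coeff k f * coeff n (w' ^ k) := by
      intro k hk hk1
      rcases Nat.eq_zero_or_pos k with hk0 | _
      · subst hk0; simp
      · have h2k : 2 ≤ k := by omega
        rw [aux_pow_congr hw hw' n (fun j hj => ih j hj) k n le_rfl (Or.inr h2k)]
    have h1mem : (1 : ℕ) ∈ Finset.range (n + 1) := by rw [Finset.mem_range]; omega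
    rw [← Finset.add_sum_erase _ _ h1mem, ← Finset.add_sum_erase _ _ h1mem] at hc
    have heq : ∑ k ∈ (Finset.range (n + 1)).erase 1, coeff k f * coeff n (w ^ k) =
        ∑ k ∈ (Finset.range (n + 1)).erase 1, coeff k f * coeff n (w' ^ k) := by
      apply Finset.sum_congr rfl
      intro k hk
      rw [Finset.mem_erase] at hk
      exact key k hk.2 hk.1
    rw [heq] at hc
    have : coeff 1 f * coeff n (w ^ 1) = coeff 1 f * coeff n (w' ^ 1) := by
      exact add_right_cancel hc
    rw [pow_one, pow_one] at this
    exact mul_left_cancel₀ hf1 this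


lemma coeff_exp' (k : ℕ) : coeff k (PowerSeries.exp K) = (k.factorial : K)⁻¹ := by
  rw [PowerSeries.coeff_exp, map_div₀, map_one, map_natCast, one_div]

lemma expComp_eq (f : PowerSeries K) : expComp K f = compPS K (PowerSeries.exp K) f := by
  ext n
  rw [expComp, coeff_mk, coeff_compPS]
  apply Finset.sum_congr rfl
  intro k _
  rw [coeff_exp']

lemma expComp_mul_expComp_neg {f : PowerSeries K} (hf : constantCoeff f = 0) :
    expComp K f * expComp K (-f) = 1 := by
  have hnegX : constantCoeff (-X : PowerSeries K) = 0 := by simp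
  have h1 : compPS K (PowerSeries.exp K) (-X) = evalNegHom (PowerSeries.exp K) := by
    ext n
    rw [coeff_compPS_negX, evalNegHom, coeff_rescale, coeff_exp']
  have h2 : expComp K (-f) = compPS K (evalNegHom (PowerSeries.exp K)) f := by
    rw [expComp_eq, ← compPS_neg_right, h1]
  rw [expComp_eq, h2, ← compPS_mul hf, PowerSeries.exp_mul_exp_neg_eq_one, compPS_one]

end

/-- Koszul duality for the coproduct, at the level of generating series.
(1) General form: if `f` (the generating series of the Koszul coproduct `O₁ ∨ O₂`, with
zero constant term) satisfies the Koszul functional inversion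
`f(−h(−t)) = t` with `h = g₁ + g₂ − t` (the connected sum of the generating series of
the quadratic duals), then `−(g₁(−f) + g₂(−f) − (−f)) = t`.
(2) In particular, for `O₁ = PreLie` (dual `Perm`, `g₁(t) = t·eᵗ`) and `O₂ = ComMag`
(`g₂(t) = t + t²/2`): if `f·e^{−f} − f²/2 = t` then `f = t·e^f + (f²/2)·e^f`. -/
theorem koszul_coproduct_series :
    (∀ f g₁ g₂ : PowerSeries K,
      PowerSeries.constantCoeff f = 0 →
      PowerSeries.constantCoeff g₁ = 0 →
      PowerSeries.constantCoeff g₂ = 0 →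
      compPS K f (-(compPS K (g₁ + g₂ - PowerSeries.X) (-PowerSeries.X))) = PowerSeries.X →
      -(compPS K g₁ (-f) + compPS K g₂ (-f) - (-f)) = PowerSeries.X)
    ∧
    (∀ f : PowerSeries K,
      PowerSeries.constantCoeff f = 0 →
      f * expComp K (-f) - PowerSeries.C (2 : K)⁻¹ * f ^ 2 = PowerSeries.X →
      f = PowerSeries.X * expComp K f + PowerSeries.C (2 : K)⁻¹ * f ^ 2 * expComp K f) := by
  constructor
  · intro f g₁ g₂ hf hg1 hg2 hyp
    set h : PowerSeries K := g₁ + g₂ - X with hh_def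
    set u : PowerSeries K := -(compPS K h (-X)) with hu_def
    have hnf : constantCoeff (-f) = 0 := by simp [hf]
    have hu0 : constantCoeff u = 0 := by
      rw [hu_def, map_neg, constantCoeff_compPS, hh_def]
      simp [hg1, hg2]
    -- rewrite goal as compPS u f = X
    have hgoal : compPS K u f = -(compPS K g₁ (-f) + compPS K g₂ (-f) - -f) := by
      rw [hu_def, compPS_neg, compPS_neg_right, hh_def, compPS_sub, compPS_add,
        compPS_X (-f) hnf]
    rw [← hgoal]
    -- coeff 1 f is nonzero
    have hf1 : coeff 1 f ≠ 0 := by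
      have h1 : coeff 1 (compPS K f u) = 1 := by rw [hyp, coeff_one_X]
      rw [coeff_compPS] at h1
      have : (Finset.range 2) = {0, 1} := rfl
      rw [this, Finset.sum_insert (by simp), Finset.sum_singleton] at h1
      simp only [pow_zero, pow_one] at h1
      rw [coeff_one, if_neg one_ne_zero, mul_zero, zero_add] at h1
      exact left_ne_zero_of_mul_eq_one h1
    -- f ∘ (u ∘ f) = f = f ∘ X
    have hassoc : compPS K f (compPS K u f) = f := by
      rw [← compPS_assoc f hu0 hf, hyp, compPS_X f hf]
    have hXright : compPS K f X = f := compPS_X_right f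
    apply compPS_left_cancel hf1 _ _ (hassoc.trans hXright.symm)
    · rw [constantCoeff_compPS, hu0]
    · simp
  · intro f hf hyp
    have key := expComp_mul_expComp_neg hf
    have calc1 : (f * expComp K (-f) - C (2 : K)⁻¹ * f ^ 2) * expComp K f +
        C (2 : K)⁻¹ * f ^ 2 * expComp K f = f * (expComp K (-f) * expComp K f) := by
      ring
    rw [← hyp, calc1, mul_comm (expComp K (-f)) (expComp K f), key, mul_one]

end KoszulGeneratingSeries
end
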